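/- Let ABC be a triangle and let P, Q, R be the points where the bisectors of the exterior angles at A, B, C meet the lines BC, CA, AB respectively (assuming these intersections exist). Then P, Q, R are collinear. -/
import Mathlib


open EuclideanGeometry
open scoped RealInnerProductSpace

noncomputable section

abbrev Pt := EuclideanSpace ℝ (Fin 2)

/-- The points where the bisectors of the exterior angles of a triangle meet the lines
containing the opposite sides are collinear.  Here each such point divides the opposite
side externally in the ratio of the adjacent sides. -/
theorem exterior_bisector_feet_collinear
    (A B C : Pt)
    (hABC : AffineIndependent ℝ ![A, B, C])
    (a b c : ℝ) (ha : a = dist B C) (hb : b = dist C A) (hc : c = dist A B)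
    (hbc : b ≠ c) (hca : c ≠ a) (hab : a ≠ b)
    (P Q R : Pt)
    (hP : P = B + (c / (c - b)) • (C - B))
    (hQ : Q = C + (a / (a - c)) • (A - C))
    (hR : R = A + (b / (b - a)) • (B - A)) :
    Collinear ℝ ({P, Q, R} : Set Pt) := by
  have hcb : c - b ≠ 0 := sub_ne_zero.mpr (Ne.symm hbc)
  have hac : a - c ≠ 0 := sub_ne_zero.mpr (Ne.symm hca)
  have hba : b - a ≠ 0 := sub_ne_zero.mpr (Ne.symm hab)
  have key : R = ((c - a) / (b - a)) • (Q - P) + P := by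
    subst hP hQ hR
    match_scalars <;> field_simp <;> ring
  rw [collinear_iff_of_mem (Set.mem_insert P {Q, R})]
  refine ⟨Q - P, ?_⟩
  rintro p (rfl | rfl | rfl)
  · exact ⟨0, by simp⟩
  · exact ⟨1, by simp [vadd_eq_add]⟩
  · exact ⟨(c - a) / (b - a), by simpa [vadd_eq_add] using key⟩
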